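/- Let f be a twice continuously differentiable, strictly positive, log-concave density on (a,b) with CDF F, and fix γ ∈ (0,1). Define φ_{γF}(v) = v − (1/γ − F(v))/f(v). Then the equation φ_{γF}(v) = 0 has at most two distinct solutions in (a,b). -/

import Mathlib

open Set

private lemma key_no_three (a b γ : ℝ) (F f : ℝ → ℝ)
    (hγ : γ ∈ Set.Ioo (0:ℝ) 1)
    (hf2 : ContDiffOn ℝ 2 f (Set.Ioo a b))
    (hfpos : ∀ v ∈ Set.Ioo a b, 0 < f v)
    (hlc : ConcaveOn ℝ (Set.Ioo a b) (fun v => Real.log (f v)))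
    (hderiv : ∀ v ∈ Set.Ioo a b, HasDerivAt F (f v) v)
    (hF01 : ∀ v ∈ Set.Ioo a b, F v ∈ Set.Icc (0:ℝ) 1)
    {w₁ w₂ w₃ : ℝ} (h1 : w₁ ∈ Set.Ioo a b) (h2 : w₂ ∈ Set.Ioo a b) (h3 : w₃ ∈ Set.Ioo a b)
    (e1 : w₁ - (1 / γ - F w₁) / f w₁ = 0)
    (e2 : w₂ - (1 / γ - F w₂) / f w₂ = 0)
    (e3 : w₃ - (1 / γ - F w₃) / f w₃ = 0)
    (h12 : w₁ < w₂) (h23 : w₂ < w₃) : False := by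
  obtain ⟨hγ0, hγ1⟩ := hγ
  have hγinv : (1:ℝ) < 1 / γ := (one_lt_div hγ0).2 hγ1
  -- f is differentiable on the open interval
  have hdf : ∀ v ∈ Set.Ioo a b, HasDerivAt f (deriv f v) v := by
    intro v hv
    have : DifferentiableAt ℝ f v :=
      (hf2.differentiableOn (by norm_num) v hv).differentiableAt
        (isOpen_Ioo.mem_nhds hv)
    exact this.hasDerivAt
  -- each zero of φ is positive and satisfies w * f w + F w = 1/γ
  have hzero : ∀ w ∈ Set.Ioo a b, w - (1 / γ - F w) / f w = 0 →
      0 < w ∧ w * f w + F w = 1 / γ := by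
    intro w hw hz
    have hfw := hfpos w hw
    have hEq : w * f w = 1 / γ - F w := by
      rw [sub_eq_zero] at hz
      exact (eq_div_iff (ne_of_gt hfw)).mp hz
    have hFw := hF01 w hw
    have hpos : 0 < w * f w := by
      rw [hEq]; linarith [hFw.2]
    refine ⟨by nlinarith, by linarith⟩
  obtain ⟨hw1pos, g1⟩ := hzero w₁ h1 e1
  obtain ⟨hw2pos, g2⟩ := hzero w₂ h2 e2
  obtain ⟨hw3pos, g3⟩ := hzero w₃ h3 e3
  -- G(v) = v * f v + F v has derivative 2 f v + v * deriv f v on Ioo a b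
  have hG : ∀ v ∈ Set.Ioo a b,
      HasDerivAt (fun v => v * f v + F v) (2 * f v + v * deriv f v) v := by
    intro v hv
    have := ((hasDerivAt_id v).mul (hdf v hv)).add (hderiv v hv)
    refine this.congr_deriv ?_
    simp only [id]
    ring
  -- Rolle between consecutive zeros
  have rolle : ∀ x y : ℝ, x ∈ Set.Ioo a b → y ∈ Set.Ioo a b → x < y →
      x * f x + F x = 1 / γ → y * f y + F y = 1 / γ →
      ∃ c ∈ Set.Ioo x y, 2 * f c + c * deriv f c = 0 := by
    intro x y hx hy hxy gx gy
    have hsub : Set.Icc x y ⊆ Set.Ioo a b := fun z hz =>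
      ⟨lt_of_lt_of_le hx.1 hz.1, lt_of_le_of_lt hz.2 hy.2⟩
    have hcont : ContinuousOn (fun v => v * f v + F v) (Set.Icc x y) := by
      intro z hz
      exact ((hG z (hsub hz)).continuousAt).continuousWithinAt
    exact exists_hasDerivAt_eq_zero hxy hcont (by rw [gx, gy])
      (fun z hz => hG z (hsub ⟨hz.1.le, hz.2.le⟩))
  obtain ⟨c₁, hc₁, hc₁z⟩ := rolle w₁ w₂ h1 h2 h12 g1 g2
  obtain ⟨c₂, hc₂, hc₂z⟩ := rolle w₂ w₃ h2 h3 h23 g2 g3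
  have hc₁ab : c₁ ∈ Set.Ioo a b := ⟨lt_trans h1.1 hc₁.1, lt_trans hc₁.2 h2.2⟩
  have hc₂ab : c₂ ∈ Set.Ioo a b := ⟨lt_trans h2.1 hc₂.1, lt_trans hc₂.2 h3.2⟩
  have hc₁pos : 0 < c₁ := lt_trans hw1pos hc₁.1
  have hc₂pos : 0 < c₂ := lt_trans hw2pos hc₂.1
  have hcc : c₁ < c₂ := lt_trans hc₁.2 hc₂.1
  -- derivative of log f
  have hL : ∀ v ∈ Set.Ioo a b,
      HasDerivAt (fun v => Real.log (f v)) (deriv f v / f v) v := by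
    intro v hv
    exact (hdf v hv).log (ne_of_gt (hfpos v hv))
  -- concavity: L'(c₂) ≤ slope ≤ L'(c₁)
  have hmono : deriv f c₂ / f c₂ ≤ deriv f c₁ / f c₁ := by
    have hs1 := hlc.slope_le_of_hasDerivAt hc₁ab hc₂ab hcc (hL c₁ hc₁ab)
    have hs2 := hlc.le_slope_of_hasDerivAt hc₁ab hc₂ab hcc (hL c₂ hc₂ab)
    exact le_trans hs2 hs1
  -- at c_i : deriv f c / f c = -2 / c
  have hval : ∀ c, 0 < c → 0 < f c → 2 * f c + c * deriv f c = 0 →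
      deriv f c / f c = -2 / c := by
    intro c hc hfc hz
    field_simp
    nlinarith [hz]
  rw [hval c₁ hc₁pos (hfpos c₁ hc₁ab) hc₁z,
      hval c₂ hc₂pos (hfpos c₂ hc₂ab) hc₂z] at hmono
  -- but -2/c is strictly increasing for c > 0
  have hlt : -2 / c₁ < -2 / c₂ := by
    rw [div_lt_div_iff₀ hc₁pos hc₂pos]
    nlinarith
  linarith

/-- For a `C²`, strictly positive, log-concave density `f` on `(a,b)` with CDF
`F` and `γ ∈ (0,1)`, the equation `φ_{γF}(v) = v − (1/γ − F(v))/f(v) = 0` has at most two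
distinct solutions in `(a,b)`. -/
theorem at_most_two_zeros (a b γ : ℝ) (F f : ℝ → ℝ)
    (hab : a < b) (hγ : γ ∈ Set.Ioo (0:ℝ) 1)
    (hf2 : ContDiffOn ℝ 2 f (Set.Ioo a b))
    (hfpos : ∀ v ∈ Set.Ioo a b, 0 < f v)
    (hlc : ConcaveOn ℝ (Set.Ioo a b) (fun v => Real.log (f v)))
    (hderiv : ∀ v ∈ Set.Ioo a b, HasDerivAt F (f v) v)
    (hF01 : ∀ v ∈ Set.Ioo a b, F v ∈ Set.Icc (0:ℝ) 1) :
    ∀ v₁ ∈ Set.Ioo a b, ∀ v₂ ∈ Set.Ioo a b, ∀ v₃ ∈ Set.Ioo a b,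
      v₁ - (1 / γ - F v₁) / f v₁ = 0 →
      v₂ - (1 / γ - F v₂) / f v₂ = 0 →
      v₃ - (1 / γ - F v₃) / f v₃ = 0 →
      v₁ = v₂ ∨ v₁ = v₃ ∨ v₂ = v₃ := by
  intro v₁ h1 v₂ h2 v₃ h3 e1 e2 e3
  by_contra hcon
  push_neg at hcon
  obtain ⟨n12, n13, n23⟩ := hcon
  have key := fun {w₁ w₂ w₃} => key_no_three a b γ F f hγ hf2 hfpos hlc hderiv hF01
    (w₁ := w₁) (w₂ := w₂) (w₃ := w₃)
  rcases lt_trichotomy v₁ v₂ with h12 | h12 | h12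
  · rcases lt_trichotomy v₂ v₃ with h23' | h23' | h23'
    · exact key h1 h2 h3 e1 e2 e3 h12 h23'
    · exact n23 h23'
    · rcases lt_trichotomy v₁ v₃ with h13 | h13 | h13
      · exact key h1 h3 h2 e1 e3 e2 h13 h23'
      · exact n13 h13
      · exact key h3 h1 h2 e3 e1 e2 h13 h12
  · exact n12 h12
  · rcases lt_trichotomy v₁ v₃ with h13 | h13 | h13
    · exact key h2 h1 h3 e2 e1 e3 h12 h13
    · exact n13 h13
    · rcases lt_trichotomy v₂ v₃ with h23' | h23' | h23'
      · exact key h2 h3 h1 e2 e3 e1 h23' h13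
      · exact n23 h23'
      · exact key h3 h2 h1 e3 e2 e1 h23' h12
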